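/- (Global tropical Menelaus / Corollary.) Let V be a finite type with a map P : V → ℝ² (vertex positions), and let d : V → V → ℝ² satisfy d a b = − d b a for all a, b, and the parallelism condition (P b − P a)₁·(d a b)₂ − (P b − P a)₂·(d a b)₁ = 0 for all a, b (bounded-edge direction vectors are parallel to the segment joining their endpoints). Let ι be a finite type with maps s : ι → V and u : ι → ℝ² (unbounded edges attached at vertex s i with direction u i). Assume the balancing condition at every vertex a ∈ V: (Σ_{b ∈ V} d a b) + Σ_{i : s i = a} u i = 0. Then the total momentum of the unbounded edges vanishes: Σ_{i ∈ ι} [(P (s i))₁·(u i)₂ − (P (s i))₂·(u i)₁] = 0. -/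
import Mathlib


/-- Global tropical Menelaus theorem: if the bounded-edge direction vectors `d a b` are
antisymmetric and parallel to the segments joining the vertex positions, and the balancing
condition holds at every vertex, then the total momentum of the unbounded edges vanishes. -/
theorem tropical_menelaus_global {V : Type*} [Fintype V] [DecidableEq V]
    (P : V → ℝ × ℝ) (d : V → V → ℝ × ℝ)
    (hanti : ∀ a b, d a b = - d b a)
    (hpar : ∀ a b, (P b - P a).1 * (d a b).2 - (P b - P a).2 * (d a b).1 = 0)
    {ι : Type*} [Fintype ι] (s : ι → V) (u : ι → ℝ × ℝ)
    (hbal : ∀ a : V, (∑ b, d a b) + (∑ i ∈ Finset.univ.filter (fun i => s i = a), u i) = 0) :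
    ∑ i, ((P (s i)).1 * (u i).2 - (P (s i)).2 * (u i).1) = 0 := by
  have key : ∀ a : V,
      (∑ b, ((P a).1 * (d a b).2 - (P a).2 * (d a b).1)) +
        ∑ i ∈ Finset.univ.filter (fun i => s i = a),
          ((P a).1 * (u i).2 - (P a).2 * (u i).1) = 0 := by
    intro a
    have h := hbal a
    have h1 := congrArg Prod.fst h
    have h2 := congrArg Prod.snd h
    simp only [Prod.fst_add, Prod.snd_add, Prod.fst_sum, Prod.snd_sum, Prod.fst_zero,
      Prod.snd_zero] at h1 h2
    have e1 : ∑ b, ((P a).1 * (d a b).2 - (P a).2 * (d a b).1)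
        = (P a).1 * (∑ b, (d a b).2) - (P a).2 * (∑ b, (d a b).1) := by
      rw [Finset.sum_sub_distrib, Finset.mul_sum, Finset.mul_sum]
    have e2 : ∑ i ∈ Finset.univ.filter (fun i => s i = a),
        ((P a).1 * (u i).2 - (P a).2 * (u i).1)
        = (P a).1 * (∑ i ∈ Finset.univ.filter (fun i => s i = a), (u i).2)
          - (P a).2 * (∑ i ∈ Finset.univ.filter (fun i => s i = a), (u i).1) := by
      rw [Finset.sum_sub_distrib, Finset.mul_sum, Finset.mul_sum]
    rw [e1, e2]
    linear_combination (P a).1 * h2 - (P a).2 * h1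
  have total : ∑ a : V,
      ((∑ b, ((P a).1 * (d a b).2 - (P a).2 * (d a b).1)) +
        ∑ i ∈ Finset.univ.filter (fun i => s i = a),
          ((P a).1 * (u i).2 - (P a).2 * (u i).1)) = 0 :=
    Finset.sum_eq_zero fun a _ => key a
  rw [Finset.sum_add_distrib] at total
  -- the double sum over bounded edges vanishes
  have hS : ∑ a : V, ∑ b : V, ((P a).1 * (d a b).2 - (P a).2 * (d a b).1) = 0 := by
    set S := ∑ a : V, ∑ b : V, ((P a).1 * (d a b).2 - (P a).2 * (d a b).1) with hSdef
    have hswap : S = ∑ a : V, ∑ b : V, ((P b).1 * (d b a).2 - (P b).2 * (d b a).1) :=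
      Finset.sum_comm
    have h2S : S + S = ∑ a : V, ∑ b : V,
        (((P a).1 * (d a b).2 - (P a).2 * (d a b).1)
          + ((P b).1 * (d b a).2 - (P b).2 * (d b a).1)) := by
      nth_rewrite 2 [hswap]
      rw [hSdef, ← Finset.sum_add_distrib]
      exact Finset.sum_congr rfl fun a _ => by rw [← Finset.sum_add_distrib]
    have hz : ∀ a b : V, ((P a).1 * (d a b).2 - (P a).2 * (d a b).1)
        + ((P b).1 * (d b a).2 - (P b).2 * (d b a).1) = 0 := by
      intro a b
      have hp := hpar a b
      have ha := hanti b a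
      simp only [Prod.fst_sub, Prod.snd_sub] at hp
      rw [ha]
      simp only [Prod.fst_neg, Prod.snd_neg]
      nlinarith [hp]
    have : S + S = 0 := by
      rw [h2S]
      exact Finset.sum_eq_zero fun a _ => Finset.sum_eq_zero fun b _ => hz a b
    linarith
  rw [hS, zero_add] at total
  -- fiberwise decomposition of the unbounded-edge momentum sum
  have hfib : ∑ a : V, ∑ i ∈ Finset.univ.filter (fun i => s i = a),
      ((P a).1 * (u i).2 - (P a).2 * (u i).1)
      = ∑ i, ((P (s i)).1 * (u i).2 - (P (s i)).2 * (u i).1) := by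
    rw [← Finset.sum_fiberwise (Finset.univ) s
      (fun i => ((P (s i)).1 * (u i).2 - (P (s i)).2 * (u i).1))]
    refine Finset.sum_congr rfl fun a _ => Finset.sum_congr rfl fun i hi => ?_
    rw [(Finset.mem_filter.mp hi).2]
  rw [hfib] at total
  exact total
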